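/- arXiv:1906.01881 — 5 statements merged into one kernel-verified Lean document; each statement's English description precedes it below -/
import Mathlib

section
/- Let V_l be the (2l+1)-dimensional irreducible unitary representation of su(2) with standard generators L₁, L₂, L₃ satisfying [L_i, L_j] = i ε_{ijk} L_k and L₁²+L₂²+L₃² = l(l+1)·I. Then for every unit vector ψ ∈ V_l, the uncertainty relation (ΔL)² ≥ |⟨L⟩| holds, where (ΔL)² := Σᵢ (⟨Lᵢ²⟩ − ⟨Lᵢ⟩²) and |⟨L⟩| := √(Σᵢ ⟨Lᵢ⟩²). Equivalently, l(l+1) ≥ |⟨L⟩|(|⟨L⟩|+1). -/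
open Complex Finset


/-- Expectation value `⟨A⟩ = ⟨ψ, Aψ⟩` of a (symmetric) operator in the state `ψ`. -/
noncomputable def expVal {V : Type*} [NormedAddCommGroup V] [InnerProductSpace ℂ V]
    (A : V →ₗ[ℂ] V) (ψ : V) : ℝ := (inner ℂ ψ (A ψ) : ℂ).re

lemma exists_pq (a0 a1 a2 : ℝ) (h : 0 < a0^2 + a1^2 + a2^2) :
    ∃ p0 p1 p2 q0 q1 q2 : ℝ,
      p0^2 + p1^2 + p2^2 + q0^2 + q1^2 + q2^2 ≤ 1 ∧
      2*((p1*q2 - p2*q1)*a0 + (p2*q0 - p0*q2)*a1 + (p0*q1 - p1*q0)*a2)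
        = Real.sqrt (a0^2 + a1^2 + a2^2) := by
  set m : ℝ := Real.sqrt (a0^2 + a1^2 + a2^2) with hm
  have hm2 : m^2 = a0^2 + a1^2 + a2^2 := Real.sq_sqrt h.le
  have hmpos : 0 < m := Real.sqrt_pos.mpr h
  have h2 : (Real.sqrt 2)^2 = 2 := Real.sq_sqrt (by norm_num)
  have h2pos : (0:ℝ) < Real.sqrt 2 := Real.sqrt_pos.mpr (by norm_num)
  have hA : ∀ x y : ℝ, (x/(y*Real.sqrt 2))^2 = x^2/(2*y^2) := by
    intro x y; rw [div_pow, mul_pow, h2, mul_comm]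
  have hB : ∀ x y u v : ℝ, (x/(y*Real.sqrt 2))*(u/(v*Real.sqrt 2)) = (x*u)/(2*(y*v)) := by
    intro x y u v
    rw [div_mul_div_comm]
    congr 1
    rw [show (y*Real.sqrt 2)*(v*Real.sqrt 2) = (Real.sqrt 2)^2*(y*v) by ring, h2]
  by_cases hr : a0^2 + a1^2 = 0
  · have ha0 : a0 = 0 := by nlinarith [sq_nonneg a0, sq_nonneg a1]
    have ha1 : a1 = 0 := by nlinarith [sq_nonneg a0, sq_nonneg a1]
    have hm2' : m^2 = a2^2 := by rw [hm2, ha0, ha1]; ring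
    refine ⟨1/(1*Real.sqrt 2), 0, 0, 0, a2/(m*Real.sqrt 2), 0, ?_, ?_⟩
    · apply le_of_eq
      simp only [hA]
      field_simp
      linear_combination -hm2'
    · rw [ha0, ha1]
      simp only [hB]
      field_simp
      linear_combination (-Real.sqrt 2)*hm2'
  · have hrpos : 0 < a0^2 + a1^2 := lt_of_le_of_ne (by positivity) (Ne.symm hr)
    set r : ℝ := Real.sqrt (a0^2 + a1^2) with hrdef
    have hr2 : r^2 = a0^2 + a1^2 := Real.sq_sqrt hrpos.le
    have hrpos' : 0 < r := Real.sqrt_pos.mpr hrpos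
    refine ⟨-a1/(r*Real.sqrt 2), a0/(r*Real.sqrt 2), 0,
      -(a2*a0)/((m*r)*Real.sqrt 2), -(a2*a1)/((m*r)*Real.sqrt 2), r/(m*Real.sqrt 2), ?_, ?_⟩
    · apply le_of_eq
      simp only [hA]
      field_simp
      linear_combination (r^2 + (a0^2+a1^2) - 2*m^2) * hr2 - (a0^2+a1^2) * hm2
    · simp only [hB]
      field_simp
      linear_combination (-Real.sqrt 2)*r^2 * hm2 + (-Real.sqrt 2)*a2^2 * hr2

lemma cs3 (t0 t1 t2 s0 s1 s2 w : ℝ) (ht0 : 0 ≤ t0) (ht1 : 0 ≤ t1) (ht2 : 0 ≤ t2)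
    (hs0 : 0 ≤ s0) (hs1 : 0 ≤ s1) (hs2 : 0 ≤ s2) (hw : 0 ≤ w)
    (h : w ≤ t0*s0 + t1*s1 + t2*s2) (h1 : t0^2 + t1^2 + t2^2 ≤ 1) :
    w^2 ≤ s0^2 + s1^2 + s2^2 := by
  have h2 : w^2 ≤ (t0*s0 + t1*s1 + t2*s2)^2 := by
    nlinarith [mul_nonneg ht0 hs0, mul_nonneg ht1 hs1, mul_nonneg ht2 hs2]
  have h3 : (t0*s0 + t1*s1 + t2*s2)^2 ≤ (t0^2+t1^2+t2^2)*(s0^2+s1^2+s2^2) := by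
    nlinarith [sq_nonneg (t0*s1 - t1*s0), sq_nonneg (t0*s2 - t2*s0), sq_nonneg (t1*s2 - t2*s1)]
  have h4 : (t0^2+t1^2+t2^2)*(s0^2+s1^2+s2^2) ≤ s0^2+s1^2+s2^2 := by
    have hs : 0 ≤ s0^2+s1^2+s2^2 := by positivity
    nlinarith
  linarith


set_option maxHeartbeats 1000000 in
/-- On the `(2l+1)`-dimensional irreducible unitary representation of `su(2)` with
generators `L₁, L₂, L₃` satisfying `[Lᵢ,Lⱼ] = i ε_{ijk} L_k` and Casimir
`L₁²+L₂²+L₃² = l(l+1)·I`, every unit vector satisfies `(ΔL)² ≥ |⟨L⟩|`, equivalently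
`l(l+1) ≥ |⟨L⟩|(|⟨L⟩|+1)`. -/
theorem stmt_9 (l : ℕ) {V : Type*} [NormedAddCommGroup V] [InnerProductSpace ℂ V]
    [FiniteDimensional ℂ V] (hdim : Module.finrank ℂ V = 2 * l + 1)
    (L : Fin 3 → (V →ₗ[ℂ] V))
    (hsym : ∀ i, (L i).IsSymmetric)
    (h12 : L 0 ∘ₗ L 1 - L 1 ∘ₗ L 0 = Complex.I • L 2)
    (h23 : L 1 ∘ₗ L 2 - L 2 ∘ₗ L 1 = Complex.I • L 0)
    (h31 : L 2 ∘ₗ L 0 - L 0 ∘ₗ L 2 = Complex.I • L 1)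
    (hcas : L 0 ∘ₗ L 0 + L 1 ∘ₗ L 1 + L 2 ∘ₗ L 2
      = ((l : ℂ) * ((l : ℂ) + 1)) • LinearMap.id)
    (ψ : V) (hψ : ‖ψ‖ = 1) :
    (∑ i, (expVal (L i ∘ₗ L i) ψ - (expVal (L i) ψ) ^ 2))
        ≥ Real.sqrt (∑ i, (expVal (L i) ψ) ^ 2) ∧
    (l : ℝ) * ((l : ℝ) + 1)
        ≥ Real.sqrt (∑ i, (expVal (L i) ψ) ^ 2)
          * (Real.sqrt (∑ i, (expVal (L i) ψ) ^ 2) + 1) := by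
  set a : Fin 3 → ℝ := fun i => expVal (L i) ψ with ha
  set m : ℝ := Real.sqrt (∑ i, (a i) ^ 2) with hm
  have hψ2 : (inner ℂ ψ ψ : ℂ) = 1 := by
    rw [inner_self_eq_norm_sq_to_K, hψ]; norm_num
  -- reality of expectation values
  have hre : ∀ i, (inner ℂ ψ (L i ψ) : ℂ) = ((a i : ℝ) : ℂ) := by
    intro i
    have h1 : (starRingEnd ℂ) (inner ℂ ψ (L i ψ) : ℂ) = (inner ℂ ψ (L i ψ) : ℂ) :=
      (inner_conj_symm (L i ψ) ψ).trans (hsym i ψ ψ)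
    exact (Complex.conj_eq_iff_re.mp h1).symm
  -- expVal of squares as norms
  have hsq : ∀ i, expVal (L i ∘ₗ L i) ψ = ‖L i ψ‖ ^ 2 := by
    intro i
    have : (inner ℂ ψ ((L i ∘ₗ L i) ψ) : ℂ) = inner ℂ (L i ψ) (L i ψ) := by
      simpa using (hsym i ψ (L i ψ)).symm
    rw [expVal, this]
    exact @inner_self_eq_norm_sq ℂ V _ _ _ (L i ψ)
  -- Casimir: sum of expVal of squares
  have hcasψ : (∑ i, expVal (L i ∘ₗ L i) ψ) = (l : ℝ) * ((l : ℝ) + 1) := by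
    have h1 := congrArg (fun (T : V →ₗ[ℂ] V) => (inner ℂ ψ (T ψ) : ℂ)) hcas
    simp only [LinearMap.add_apply, LinearMap.smul_apply, LinearMap.id_apply,
      inner_add_right, inner_smul_right, hψ2, mul_one] at h1
    have h2 := congrArg Complex.re h1
    simp only [Fin.sum_univ_three, expVal]
    simp only [Complex.add_re] at h2
    rw [show ((l:ℂ)*((l:ℂ)+1)).re = (l:ℝ)*((l:ℝ)+1) by push_cast; simp] at h2
    exact h2
  -- centered vectors
  set Φ : Fin 3 → V := fun i => L i ψ - ((a i : ℝ) : ℂ) • ψ with hΦ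
  have hre' : ∀ i, (inner ℂ (L i ψ) ψ : ℂ) = ((a i : ℝ) : ℂ) :=
    fun i => (hsym i ψ ψ).trans (hre i)
  have hgram : ∀ i j, (inner ℂ (Φ i) (Φ j) : ℂ)
      = inner ℂ (L i ψ) (L j ψ) - ((a i : ℝ) : ℂ) * ((a j : ℝ) : ℂ) := by
    intro i j
    simp only [hΦ, inner_sub_left, inner_sub_right, inner_smul_left, inner_smul_right,
      hre, hre', hψ2, Complex.conj_ofReal]
    ring
  have hΦnorm : ∀ i, ‖Φ i‖ ^ 2 = expVal (L i ∘ₗ L i) ψ - (a i) ^ 2 := by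
    intro i
    have h1 : (inner ℂ (Φ i) (Φ i) : ℂ).re = ‖Φ i‖ ^ 2 := @inner_self_eq_norm_sq ℂ V _ _ _ (Φ i)
    have h2 : (inner ℂ (L i ψ) (L i ψ) : ℂ).re = ‖L i ψ‖ ^ 2 :=
      @inner_self_eq_norm_sq ℂ V _ _ _ (L i ψ)
    rw [← h1, hgram i i, Complex.sub_re, h2, hsq i]
    norm_num
    ring
  have hLL : ∀ i j, (inner ℂ (L i ψ) (L j ψ) : ℂ) = inner ℂ ψ ((L i ∘ₗ L j) ψ) := by
    intro i j
    simpa using hsym i ψ (L j ψ)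
  -- Gram antisymmetric parts
  have hcommgen : ∀ i j k, (L i ∘ₗ L j - L j ∘ₗ L i = Complex.I • L k) →
      (inner ℂ (Φ i) (Φ j) : ℂ) - inner ℂ (Φ j) (Φ i) = Complex.I * (a k : ℝ) := by
    intro i j k hcomm
    have h1 := congrArg (fun (T : V →ₗ[ℂ] V) => (inner ℂ ψ (T ψ) : ℂ)) hcomm
    simp only [LinearMap.sub_apply, LinearMap.smul_apply, inner_sub_right,
      inner_smul_right, hre] at h1
    rw [hgram, hgram, hLL, hLL]
    rw [show (inner ℂ ψ ((L i ∘ₗ L j) ψ) : ℂ) - ((a i : ℝ) : ℂ) * ((a j : ℝ) : ℂ)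
        - ((inner ℂ ψ ((L j ∘ₗ L i) ψ) : ℂ) - ((a j : ℝ) : ℂ) * ((a i : ℝ) : ℂ))
        = (inner ℂ ψ ((L i ∘ₗ L j) ψ) : ℂ) - (inner ℂ ψ ((L j ∘ₗ L i) ψ) : ℂ) by ring]
    exact h1
  have hg12 := hcommgen 0 1 2 h12
  have hg23 := hcommgen 1 2 0 h23
  have hg31 := hcommgen 2 0 1 h31
  -- the key inequality
  have key : (∑ i, ‖Φ i‖ ^ 2) ≥ m := by
    by_cases h0 : (∑ i, (a i) ^ 2) = 0
    · rw [hm, h0, Real.sqrt_zero]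
      positivity
    · have hpos : 0 < a 0 ^ 2 + a 1 ^ 2 + a 2 ^ 2 := by
        have h1 : (0:ℝ) ≤ ∑ i, (a i) ^ 2 := by positivity
        have h2 : (∑ i, (a i) ^ 2) = a 0 ^ 2 + a 1 ^ 2 + a 2 ^ 2 := Fin.sum_univ_three _
        rcases lt_or_eq_of_le h1 with h | h
        · linarith [h2 ▸ h]
        · exact absurd h.symm h0
      have hmeq : m = Real.sqrt (a 0 ^ 2 + a 1 ^ 2 + a 2 ^ 2) := by
        rw [hm, Fin.sum_univ_three]
      obtain ⟨p0, p1, p2, q0, q1, q2, hpq1, hpq2⟩ := exists_pq (a 0) (a 1) (a 2) hpos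
      rw [← hmeq] at hpq2
      set c0 : ℂ := (p0:ℂ) + q0 * Complex.I with hc0
      set c1 : ℂ := (p1:ℂ) + q1 * Complex.I with hc1
      set c2 : ℂ := (p2:ℂ) + q2 * Complex.I with hc2
      set d0 : ℂ := (p0:ℂ) - q0 * Complex.I with hd0
      set d1 : ℂ := (p1:ℂ) - q1 * Complex.I with hd1
      set d2 : ℂ := (p2:ℂ) - q2 * Complex.I with hd2
      set Φc : V := c0 • Φ 0 + c1 • Φ 1 + c2 • Φ 2 with hΦc
      set Φd : V := d0 • Φ 0 + d1 • Φ 1 + d2 • Φ 2 with hΦd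
      -- complex identity
      have hpq2C : ((2*((p1*q2 - p2*q1)*(a 0) + (p2*q0 - p0*q2)*(a 1)
          + (p0*q1 - p1*q0)*(a 2)) : ℝ) : ℂ) = ((m:ℝ):ℂ) :=
        congrArg (fun x : ℝ => (x : ℂ)) hpq2
      push_cast at hpq2C
      have hD : (inner ℂ Φd Φd : ℂ) - inner ℂ Φc Φc = ((m:ℝ):ℂ) := by
        rw [hΦc, hΦd]
        simp only [inner_add_left, inner_add_right, inner_smul_left, inner_smul_right,
          hc0, hc1, hc2, hd0, hd1, hd2, map_add, map_sub, map_mul, Complex.conj_ofReal,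
          Complex.conj_I]
        linear_combination (((p0:ℂ) + q0 * Complex.I)*((p1:ℂ) - q1 * Complex.I)
              - ((p0:ℂ) - q0 * Complex.I)*((p1:ℂ) + q1 * Complex.I)) * hg12
          + (((p1:ℂ) + q1 * Complex.I)*((p2:ℂ) - q2 * Complex.I)
              - ((p1:ℂ) - q1 * Complex.I)*((p2:ℂ) + q2 * Complex.I)) * hg23
          + (((p2:ℂ) + q2 * Complex.I)*((p0:ℂ) - q0 * Complex.I)
              - ((p2:ℂ) - q2 * Complex.I)*((p0:ℂ) + q0 * Complex.I)) * hg31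
          + hpq2C
          + (2*(((q1:ℂ)*p2 - (p1:ℂ)*q2)*((a 0 : ℝ):ℂ) + ((p0:ℂ)*q2 - (q0:ℂ)*p2)*((a 1 : ℝ):ℂ)
              + ((q0:ℂ)*p1 - (p0:ℂ)*q1)*((a 2 : ℝ):ℂ))) * Complex.I_sq
      have hDr : ‖Φd‖ ^ 2 - ‖Φc‖ ^ 2 = m := by
        have e1 : (inner ℂ Φd Φd : ℂ) = ((‖Φd‖ ^ 2 : ℝ) : ℂ) := by
          rw [inner_self_eq_norm_sq_to_K]; push_cast; rfl
        have e2 : (inner ℂ Φc Φc : ℂ) = ((‖Φc‖ ^ 2 : ℝ) : ℂ) := by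
          rw [inner_self_eq_norm_sq_to_K]; push_cast; rfl
        rw [e1, e2] at hD
        exact_mod_cast hD
      -- Cauchy-Schwarz bound
      have hnd : ∀ x y : ℝ, ‖(x:ℂ) - y * Complex.I‖ ^ 2 = x ^ 2 + y ^ 2 := by
        intro x y
        rw [Complex.sq_norm, Complex.normSq_apply]
        simp
        ring
      have htri : ‖Φd‖ ≤ ‖d0‖ * ‖Φ 0‖ + ‖d1‖ * ‖Φ 1‖ + ‖d2‖ * ‖Φ 2‖ := by
        rw [hΦd]
        calc ‖d0 • Φ 0 + d1 • Φ 1 + d2 • Φ 2‖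
            ≤ ‖d0 • Φ 0 + d1 • Φ 1‖ + ‖d2 • Φ 2‖ := norm_add_le _ _
          _ ≤ (‖d0 • Φ 0‖ + ‖d1 • Φ 1‖) + ‖d2 • Φ 2‖ := by
              gcongr
              exact norm_add_le _ _
          _ = ‖d0‖ * ‖Φ 0‖ + ‖d1‖ * ‖Φ 1‖ + ‖d2‖ * ‖Φ 2‖ := by
              rw [norm_smul, norm_smul, norm_smul]
      have hCS : ‖Φd‖ ^ 2 ≤ ∑ i, ‖Φ i‖ ^ 2 := by
        have ht0 : ‖d0‖ ^ 2 = p0 ^ 2 + q0 ^ 2 := hnd p0 q0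
        have ht1 : ‖d1‖ ^ 2 = p1 ^ 2 + q1 ^ 2 := hnd p1 q1
        have ht2 : ‖d2‖ ^ 2 = p2 ^ 2 + q2 ^ 2 := hnd p2 q2
        have hts : ‖d0‖ ^ 2 + ‖d1‖ ^ 2 + ‖d2‖ ^ 2 ≤ 1 := by
          rw [ht0, ht1, ht2]; linarith
        rw [Fin.sum_univ_three]
        exact cs3 ‖d0‖ ‖d1‖ ‖d2‖ ‖Φ 0‖ ‖Φ 1‖ ‖Φ 2‖ ‖Φd‖ (norm_nonneg _) (norm_nonneg _)
          (norm_nonneg _) (norm_nonneg _) (norm_nonneg _) (norm_nonneg _) (norm_nonneg _)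
          htri hts
      have hc2' : (0:ℝ) ≤ ‖Φc‖ ^ 2 := sq_nonneg _
      linarith [hDr, hCS, hc2']
  have hmsq : m ^ 2 = ∑ i, (a i) ^ 2 := Real.sq_sqrt (by positivity)
  have hsum : (∑ i, (expVal (L i ∘ₗ L i) ψ - (a i) ^ 2)) = ∑ i, ‖Φ i‖ ^ 2 := by
    refine Finset.sum_congr rfl fun i _ => ?_
    rw [hΦnorm i]
  constructor
  · rw [hsum]; exact key
  · have h1 : (∑ i, ‖Φ i‖ ^ 2) = (l : ℝ) * ((l : ℝ) + 1) - m ^ 2 := by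
      rw [← hsum, Finset.sum_sub_distrib, hcasψ, hmsq]
    nlinarith [key, Real.sqrt_nonneg (∑ i, (a i) ^ 2)]
end

section
/- Let Λ ≥ 2 be an integer, k ≥ Λ²(Λ+1)², and b_m := √(1+m(m−1)/k) for 1 ≤ m ≤ Λ. Define S := (2Λ/(2Λ+1)) + 2(Λ²−1)Λ/(3(2Λ+1)k) − 4[Σ_{m=1}^Λ b_m]²/(2Λ+1)². Then S ≤ 2/(3(Λ+1)). -/
/-- For `Λ ≥ 2`, `k ≥ Λ²(Λ+1)²` and `b_m = √(1+m(m−1)/k)`, the square space dispersion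
`S = 2Λ/(2Λ+1) + 2(Λ²−1)Λ/(3(2Λ+1)k) − 4[∑_{m=1}^Λ b_m]²/(2Λ+1)²` of the
uniform-phase coherent states on the fuzzy circle satisfies `S ≤ 2/(3(Λ+1))`. -/
theorem stmt_16 (Λ : ℕ) (hΛ : 2 ≤ Λ) (k : ℝ)
    (hk : (Λ : ℝ) ^ 2 * ((Λ : ℝ) + 1) ^ 2 ≤ k) :
    2 * (Λ : ℝ) / (2 * (Λ : ℝ) + 1)
        + 2 * ((Λ : ℝ) ^ 2 - 1) * (Λ : ℝ) / (3 * (2 * (Λ : ℝ) + 1) * k)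
        - 4 * (∑ m ∈ Finset.Icc 1 Λ, Real.sqrt (1 + (m : ℝ) * ((m : ℝ) - 1) / k)) ^ 2
            / (2 * (Λ : ℝ) + 1) ^ 2
      ≤ 2 / (3 * ((Λ : ℝ) + 1)) := by
  have hx : (2:ℝ) ≤ (Λ:ℝ) := by exact_mod_cast hΛ
  set x := (Λ:ℝ) with hxdef
  have hKpos : (0:ℝ) < x^2*(x+1)^2 := by nlinarith
  have hkpos : (0:ℝ) < k := lt_of_lt_of_le hKpos hk
  set s := ∑ m ∈ Finset.Icc 1 Λ, Real.sqrt (1 + (m : ℝ) * ((m : ℝ) - 1) / k) with hsdef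
  have hs : x ≤ s := by
    have : x = ∑ m ∈ Finset.Icc 1 Λ, (1:ℝ) := by
      simp [Nat.card_Icc, hxdef]
    rw [this, hsdef]
    apply Finset.sum_le_sum
    intro m hm
    have hm1 : (1:ℝ) ≤ (m:ℝ) := by exact_mod_cast (Finset.mem_Icc.mp hm).1
    have hnn : (0:ℝ) ≤ (m:ℝ)*((m:ℝ)-1)/k := by
      apply div_nonneg _ hkpos.le
      nlinarith
    calc (1:ℝ) = Real.sqrt 1 := Real.sqrt_one.symm
      _ ≤ _ := Real.sqrt_le_sqrt (by linarith)
  have hsnn : (0:ℝ) ≤ s := by linarith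
  have h2x : (0:ℝ) < 2*x+1 := by linarith
  have h1 : 4*x^2/(2*x+1)^2 ≤ 4*s^2/(2*x+1)^2 := by
    gcongr
  have hnum : (0:ℝ) ≤ 2*(x^2-1)*x := by nlinarith
  have h2 : 2*(x^2-1)*x/(3*(2*x+1)*k) ≤ 2*(x^2-1)*x/(3*(2*x+1)*(x^2*(x+1)^2)) := by
    apply div_le_div_of_nonneg_left hnum (by positivity)
    nlinarith
  have h3 : 2*x/(2*x+1) + 2*(x^2-1)*x/(3*(2*x+1)*(x^2*(x+1)^2)) - 4*x^2/(2*x+1)^2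
      ≤ 2/(3*(x+1)) := by
    rw [← sub_nonneg]
    have hxpos : (0:ℝ) < x := by linarith
    have hx1 : (0:ℝ) < x+1 := by linarith
    have heq : 2/(3*(x+1)) - (2*x/(2*x+1) + 2*(x^2-1)*x/(3*(2*x+1)*(x^2*(x+1)^2))
        - 4*x^2/(2*x+1)^2)
        = 2*(x^3 - x^2 + 2*x + 1)/(3*(x+1)*(2*x+1)^2*x) := by
      field_simp
      ring
    rw [heq]
    have : (0:ℝ) < x^3 - x^2 + 2*x + 1 := by nlinarith
    positivity
  linarith
end

section
/- Let Λ ≥ 1, k ≥ Λ²(Λ+1)², and let χ ∈ ℝ^{2Λ+1} have components χ_m = cos(πm/(2Λ+2)) for m = −Λ,...,Λ. Then ⟨χ,χ⟩ = Λ+1, and the quantity ⟨x²⟩_χ := 1 + [2Σ_{m=1}^{Λ−1}(m²/k)χ_m²]/(Λ+1) + [Λ(Λ−1)/k − 1]χ_Λ²/(Λ+1) satisfies ⟨x²⟩_χ ≤ 1 + 1/(Λ+1)². -/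
open Real

lemma sum_Icc_neg (g : ℤ → ℝ) (n : ℕ) :
    ∑ m ∈ Finset.Icc (-(n:ℤ)) (n:ℤ), g m
      = g 0 + ∑ m ∈ Finset.Icc (1:ℤ) (n:ℤ), (g m + g (-m)) := by
  induction n with
  | zero => simp
  | succ n ih =>
      have h1 : Finset.Icc (-((n+1:ℕ):ℤ)) ((n+1:ℕ):ℤ)
          = insert (-((n:ℤ)+1)) (insert ((n:ℤ)+1) (Finset.Icc (-(n:ℤ)) (n:ℤ))) := by
        ext x; simp only [Finset.mem_Icc, Finset.mem_insert]; push_cast; omega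
      have h2 : Finset.Icc (1:ℤ) ((n+1:ℕ):ℤ)
          = insert ((n:ℤ)+1) (Finset.Icc (1:ℤ) (n:ℤ)) := by
        ext x; simp only [Finset.mem_Icc, Finset.mem_insert]; push_cast; omega
      rw [h1, h2, Finset.sum_insert, Finset.sum_insert, Finset.sum_insert, ih]
      · ring
      · simp only [Finset.mem_Icc]; omega
      · simp only [Finset.mem_Icc]; omega
      · simp only [Finset.mem_insert, Finset.mem_Icc]; omega

lemma gauss (n : ℕ) : ∑ m ∈ Finset.Icc 1 n, (m:ℝ) = n*(n+1)/2 := by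
  induction n with
  | zero => simp
  | succ n ih =>
      rw [Finset.sum_Icc_succ_top (by omega)]
      push_cast
      rw [ih]; ring

/-- For `Λ ≥ 1` and `k ≥ Λ²(Λ+1)²`, the vector `χ` with components
`χ_m = cos(πm/(2Λ+2))`, `m = −Λ,…,Λ`, satisfies `⟨χ,χ⟩ = Λ+1` and
`⟨x²⟩_χ = 1 + [2∑_{m=1}^{Λ−1}(m²/k)χ_m²]/(Λ+1) + [Λ(Λ−1)/k − 1]χ_Λ²/(Λ+1)
  ≤ 1 + 1/(Λ+1)²`. -/
theorem stmt_17 (Λ : ℕ) (hΛ : 1 ≤ Λ) (k : ℝ)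
    (hk : (Λ : ℝ) ^ 2 * ((Λ : ℝ) + 1) ^ 2 ≤ k) :
    (∑ m ∈ Finset.Icc (-(Λ : ℤ)) (Λ : ℤ),
        Real.cos (π * (m : ℝ) / (2 * (Λ : ℝ) + 2)) ^ 2) = (Λ : ℝ) + 1 ∧
    1 + (2 * ∑ m ∈ Finset.Icc 1 (Λ - 1),
          ((m : ℝ) ^ 2 / k) * Real.cos (π * (m : ℝ) / (2 * (Λ : ℝ) + 2)) ^ 2)
            / ((Λ : ℝ) + 1)
      + ((Λ : ℝ) * ((Λ : ℝ) - 1) / k - 1)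
          * Real.cos (π * (Λ : ℝ) / (2 * (Λ : ℝ) + 2)) ^ 2 / ((Λ : ℝ) + 1)
      ≤ 1 + 1 / ((Λ : ℝ) + 1) ^ 2 := by
  have hΛR : (1:ℝ) ≤ (Λ:ℝ) := by exact_mod_cast hΛ
  have hd : (2*(Λ:ℝ)+2) ≠ 0 := by nlinarith
  constructor
  · rw [sum_Icc_neg (fun m => Real.cos (π * (m : ℝ) / (2 * (Λ : ℝ) + 2)) ^ 2) Λ]
    have heven : ∀ m : ℤ, Real.cos (π * ((-m : ℤ) : ℝ) / (2 * (Λ : ℝ) + 2)) ^ 2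
        = Real.cos (π * (m : ℝ) / (2 * (Λ : ℝ) + 2)) ^ 2 := by
      intro m
      push_cast
      rw [show π * -(m:ℝ) / (2 * (Λ:ℝ) + 2) = -(π * (m:ℝ) / (2 * (Λ:ℝ) + 2)) by ring,
        Real.cos_neg]
    have hrefl : ∑ m ∈ Finset.Icc (1:ℤ) (Λ:ℤ),
        Real.cos (π * (m : ℝ) / (2 * (Λ : ℝ) + 2)) ^ 2
        = ∑ m ∈ Finset.Icc (1:ℤ) (Λ:ℤ),
        Real.sin (π * (m : ℝ) / (2 * (Λ : ℝ) + 2)) ^ 2 := by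
      refine Finset.sum_nbij' (fun m => (Λ:ℤ)+1-m) (fun m => (Λ:ℤ)+1-m) ?_ ?_ ?_ ?_ ?_
      · intro a ha; simp only [Finset.mem_Icc] at *; omega
      · intro a ha; simp only [Finset.mem_Icc] at *; omega
      · intro a _; ring
      · intro a _; ring
      · intro a _
        have h : π * (((Λ:ℤ)+1-a : ℤ) : ℝ) / (2 * (Λ:ℝ) + 2)
            = π/2 - π * ((a:ℤ):ℝ) / (2 * (Λ:ℝ) + 2) := by
          push_cast; field_simp
        rw [h, Real.sin_pi_div_two_sub]
    have hsum : ∑ m ∈ Finset.Icc (1:ℤ) (Λ:ℤ),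
        (Real.cos (π * (m : ℝ) / (2 * (Λ : ℝ) + 2)) ^ 2
          + Real.cos (π * ((-m:ℤ) : ℝ) / (2 * (Λ : ℝ) + 2)) ^ 2) = (Λ:ℝ) := by
      calc _ = ∑ m ∈ Finset.Icc (1:ℤ) (Λ:ℤ),
            (Real.cos (π * (m : ℝ) / (2 * (Λ : ℝ) + 2)) ^ 2
              + Real.cos (π * (m : ℝ) / (2 * (Λ : ℝ) + 2)) ^ 2) := by
              refine Finset.sum_congr rfl fun m _ => ?_; rw [heven]
        _ = ∑ m ∈ Finset.Icc (1:ℤ) (Λ:ℤ),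
            (Real.cos (π * (m : ℝ) / (2 * (Λ : ℝ) + 2)) ^ 2
              + Real.sin (π * (m : ℝ) / (2 * (Λ : ℝ) + 2)) ^ 2) := by
              rw [Finset.sum_add_distrib, Finset.sum_add_distrib, hrefl]
        _ = ∑ m ∈ Finset.Icc (1:ℤ) (Λ:ℤ), (1:ℝ) := by
              refine Finset.sum_congr rfl fun m _ => ?_
              rw [Real.cos_sq_add_sin_sq]
        _ = (Λ:ℝ) := by
              rw [Finset.sum_const, Int.card_Icc]
              simp
    simp only [hsum]
    norm_num
    ring
  · have hk0 : (0:ℝ) < k := by nlinarith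
    have hΛ1 : (0:ℝ) < (Λ:ℝ) + 1 := by linarith
    set S := ∑ m ∈ Finset.Icc 1 (Λ - 1),
          ((m : ℝ) ^ 2 / k) * Real.cos (π * (m : ℝ) / (2 * (Λ : ℝ) + 2)) ^ 2 with hSdef
    set cL := Real.cos (π * (Λ : ℝ) / (2 * (Λ : ℝ) + 2)) ^ 2 with hcLdef
    set T := (Λ : ℝ) * ((Λ : ℝ) - 1) / k with hTdef
    have hT0 : 0 ≤ T := div_nonneg (by nlinarith) hk0.le
    have hT : T ≤ 1/((Λ:ℝ)+1)^2 := by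
      rw [hTdef, div_le_div_iff₀ hk0 (pow_pos hΛ1 2)]
      nlinarith
    have hS : 2 * S ≤ (Λ:ℝ) * T := by
      have hstep : S ≤ ∑ m ∈ Finset.Icc 1 (Λ - 1), (Λ:ℝ)/k * (m:ℝ) := by
        refine Finset.sum_le_sum fun m hm => ?_
        simp only [Finset.mem_Icc] at hm
        have hm1 : (1:ℝ) ≤ (m:ℝ) := by exact_mod_cast hm.1
        have hmΛ : (m:ℝ) ≤ (Λ:ℝ) := by
          have : m ≤ Λ := le_trans hm.2 (Nat.sub_le _ _)
          exact_mod_cast this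
        have hcos1 : Real.cos (π * (m : ℝ) / (2 * (Λ : ℝ) + 2)) ^ 2 ≤ 1 :=
          Real.cos_sq_le_one _
        have hcos0 : (0:ℝ) ≤ Real.cos (π * (m : ℝ) / (2 * (Λ : ℝ) + 2)) ^ 2 :=
          sq_nonneg _
        have h1 : ((m : ℝ) ^ 2 / k) * Real.cos (π * (m : ℝ) / (2 * (Λ : ℝ) + 2)) ^ 2
            ≤ (m:ℝ)^2/k := by
          nlinarith [div_nonneg (sq_nonneg (m:ℝ)) hk0.le]
        have h2 : (m:ℝ)^2/k ≤ (Λ:ℝ)/k * (m:ℝ) := by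
          rw [div_mul_eq_mul_div, div_le_div_iff₀ hk0 hk0]
          nlinarith [mul_le_mul_of_nonneg_right hmΛ (le_trans zero_le_one hm1)]
        linarith
      have hcast : ((Λ - 1 : ℕ) : ℝ) = (Λ:ℝ) - 1 := by
        have := Nat.cast_sub hΛ (R := ℝ); simpa using this
      have heq : ∑ m ∈ Finset.Icc 1 (Λ - 1), (Λ:ℝ)/k * (m:ℝ) = (Λ:ℝ) * T / 2 := by
        rw [← Finset.mul_sum, gauss, hcast, hTdef]
        ring
      rw [heq] at hstep
      linarith
    have hS0 : (0:ℝ) ≤ S := by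
      refine Finset.sum_nonneg fun m _ => ?_
      exact mul_nonneg (div_nonneg (sq_nonneg _) hk0.le) (sq_nonneg _)
    have hcL1 : cL ≤ 1 := Real.cos_sq_le_one _
    have hcL0 : (0:ℝ) ≤ cL := sq_nonneg _
    have hTc : T * cL ≤ T := mul_le_of_le_one_right hT0 hcL1
    have hLT : (Λ:ℝ) * T ≤ (Λ:ℝ) * (1/((Λ:ℝ)+1)^2) :=
      mul_le_mul_of_nonneg_left hT (by linarith)
    have hinv : ((Λ:ℝ)+1) * (1/((Λ:ℝ)+1)^2) = 1/((Λ:ℝ)+1) := by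
      field_simp
    have hmain : 2*S + (T-1)*cL ≤ 1/((Λ:ℝ)+1) := by nlinarith
    have hfin : (2*S + (T-1)*cL)/((Λ:ℝ)+1) ≤ 1/((Λ:ℝ)+1)^2 := by
      rw [div_le_iff₀ hΛ1]
      calc 2*S + (T-1)*cL ≤ 1/((Λ:ℝ)+1) := hmain
        _ = 1/((Λ:ℝ)+1)^2 * ((Λ:ℝ)+1) := by rw [mul_comm, hinv]
    calc 1 + (2 * S)/((Λ:ℝ)+1) + (T - 1) * cL / ((Λ:ℝ)+1)
        = 1 + (2*S + (T-1)*cL)/((Λ:ℝ)+1) := by ring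
      _ ≤ 1 + 1/((Λ:ℝ)+1)^2 := by linarith
end

section
/- Let Λ ≥ 1 and define χ_m := cos(πm/(2Λ+2)) for m = −Λ,...,Λ and b_m := √(1+m(m−1)/k) with k > 0. Then Σ_{m=1−Λ}^{Λ} b_m χ_m χ_{m−1} ≥ (Λ+1)·cos(π/(2Λ+2)). -/
open Real

/-- For `Λ ≥ 1`, `k > 0`, `χ_m = cos(πm/(2Λ+2))` and `b_m = √(1+m(m−1)/k)`:
`∑_{m=1−Λ}^{Λ} b_m χ_m χ_{m−1} ≥ (Λ+1) cos(π/(2Λ+2))`. -/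
theorem stmt_18 (Λ : ℕ) (hΛ : 1 ≤ Λ) (k : ℝ) (hk : 0 < k) :
    ∑ m ∈ Finset.Icc (1 - (Λ : ℤ)) (Λ : ℤ),
        Real.sqrt (1 + (m : ℝ) * ((m : ℝ) - 1) / k)
          * Real.cos (π * (m : ℝ) / (2 * (Λ : ℝ) + 2))
          * Real.cos (π * ((m : ℝ) - 1) / (2 * (Λ : ℝ) + 2))
      ≥ ((Λ : ℝ) + 1) * Real.cos (π / (2 * (Λ : ℝ) + 2)) := by
  have hN : (0:ℝ) < 2*(Λ:ℝ)+2 := by positivity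
  set θ : ℝ := π / (2*(Λ:ℝ)+2) with hθ
  have hθpos : 0 < θ := by positivity
  have hπeq : θ * (2*(Λ:ℝ)+2) = π := by
    rw [hθ]; field_simp
  have hcos : ∀ x : ℝ, |x| ≤ (Λ:ℝ) → 0 < Real.cos (x * θ) := by
    intro x hx
    apply Real.cos_pos_of_mem_Ioo
    have h1 : |x * θ| ≤ (Λ:ℝ) * θ := by
      rw [abs_mul, abs_of_pos hθpos]
      exact mul_le_mul_of_nonneg_right hx hθpos.le
    have h2 : (Λ:ℝ) * θ < π / 2 := by nlinarith
    constructor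
    · nlinarith [neg_abs_le (x * θ)]
    · nlinarith [le_abs_self (x * θ)]
  have hcoslem : ∀ m : ℤ, m ∈ Finset.Icc (1 - (Λ:ℤ)) (Λ:ℤ) →
      0 < Real.cos ((m:ℝ) * θ) ∧ 0 < Real.cos (((m:ℝ) - 1) * θ) := by
    intro m hm
    simp only [Finset.mem_Icc] at hm
    have c1 : ((-(Λ:ℤ)):ℝ) ≤ (m:ℝ) := by exact_mod_cast le_trans (by omega) hm.1
    have c2 : (m:ℝ) ≤ ((Λ:ℤ):ℝ) := by exact_mod_cast hm.2
    have c3 : ((-(Λ:ℤ)):ℝ) ≤ ((m - 1 : ℤ):ℝ) := by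
      have : (-(Λ:ℤ)) ≤ m - 1 := by omega
      exact_mod_cast this
    have c4 : ((m - 1 : ℤ):ℝ) ≤ ((Λ:ℤ):ℝ) := by
      have : (m - 1 : ℤ) ≤ Λ := by omega
      exact_mod_cast this
    push_cast at c1 c2 c3 c4
    constructor
    · exact hcos _ (abs_le.mpr ⟨by linarith, by linarith⟩)
    · exact hcos _ (abs_le.mpr ⟨by linarith, by linarith⟩)
  have harg : ∀ m : ℤ, π * (m:ℝ) / (2*(Λ:ℝ)+2) = (m:ℝ) * θ := by
    intro m; rw [hθ]; ring
  have harg' : ∀ m : ℤ, π * ((m:ℝ) - 1) / (2*(Λ:ℝ)+2) = ((m:ℝ) - 1) * θ := by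
    intro m; rw [hθ]; ring
  -- step 1: lower bound by the sum with b_m = 1
  have step1 : ∑ m ∈ Finset.Icc (1 - (Λ:ℤ)) (Λ:ℤ),
      Real.cos ((m:ℝ) * θ) * Real.cos (((m:ℝ) - 1) * θ)
      ≤ ∑ m ∈ Finset.Icc (1 - (Λ:ℤ)) (Λ:ℤ),
        Real.sqrt (1 + (m:ℝ) * ((m:ℝ) - 1) / k)
          * Real.cos (π * (m:ℝ) / (2*(Λ:ℝ)+2))
          * Real.cos (π * ((m:ℝ) - 1) / (2*(Λ:ℝ)+2)) := by
    apply Finset.sum_le_sum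
    intro m hm
    rw [harg, harg']
    obtain ⟨hc1, hc2⟩ := hcoslem m hm
    have hmm : (0:ℤ) ≤ m * (m - 1) := by
      rcases le_or_gt m 0 with h | h
      · nlinarith
      · nlinarith
    have hmm' : (0:ℝ) ≤ (m:ℝ) * ((m:ℝ) - 1) := by exact_mod_cast hmm
    have hsq : 1 ≤ Real.sqrt (1 + (m:ℝ) * ((m:ℝ) - 1) / k) := by
      rw [Real.one_le_sqrt]
      have : 0 ≤ (m:ℝ) * ((m:ℝ) - 1) / k := div_nonneg hmm' hk.le
      linarith
    nlinarith [mul_pos hc1 hc2]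
  -- step 2: compute the sum with b_m = 1 exactly
  have hsinθ : 0 < Real.sin θ := by
    apply Real.sin_pos_of_pos_of_lt_pi hθpos
    nlinarith
  have hps : ∀ m : ℤ, Real.cos ((m:ℝ) * θ) * Real.cos (((m:ℝ) - 1) * θ)
      = (Real.cos θ + Real.cos ((2*(m:ℝ) - 1) * θ)) / 2 := by
    intro m
    have h1 := Real.cos_add ((m:ℝ) * θ) (((m:ℝ) - 1) * θ)
    have h2 := Real.cos_sub ((m:ℝ) * θ) (((m:ℝ) - 1) * θ)
    rw [show (m:ℝ) * θ + ((m:ℝ) - 1) * θ = (2*(m:ℝ) - 1) * θ by ring] at h1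
    rw [show (m:ℝ) * θ - ((m:ℝ) - 1) * θ = θ by ring] at h2
    rw [h1, h2]; ring
  have htel : ∀ m : ℤ, Real.cos ((2*(m:ℝ) - 1) * θ) * (2 * Real.sin θ)
      = Real.sin (2*(m:ℝ) * θ) - Real.sin ((2*(m:ℝ) - 2) * θ) := by
    intro m
    have h1 := Real.sin_add ((2*(m:ℝ) - 1) * θ) θ
    have h2 := Real.sin_sub ((2*(m:ℝ) - 1) * θ) θ
    rw [show (2*(m:ℝ) - 1) * θ + θ = 2*(m:ℝ) * θ by ring] at h1
    rw [show (2*(m:ℝ) - 1) * θ - θ = (2*(m:ℝ) - 2) * θ by ring] at h2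
    rw [h1, h2]; ring
  have hmap : Finset.Icc (1 - (Λ:ℤ)) (Λ:ℤ)
      = (Finset.range (2*Λ)).map
          ⟨fun i : ℕ => 1 - (Λ:ℤ) + (i:ℤ), show Function.Injective _ from fun a b h => by simpa using h⟩ := by
    ext x
    simp only [Finset.mem_Icc, Finset.mem_map, Finset.mem_range,
      Function.Embedding.coeFn_mk]
    constructor
    · intro hx
      refine ⟨(x - (1 - (Λ:ℤ))).toNat, ?_, ?_⟩ <;> omega
    · rintro ⟨i, hi, rfl⟩
      omega
  set f : ℕ → ℝ := fun j => Real.sin ((2*(j:ℝ) - 2*(Λ:ℝ)) * θ) with hf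
  have hS : ∑ m ∈ Finset.Icc (1 - (Λ:ℤ)) (Λ:ℤ), Real.cos ((2*(m:ℝ) - 1) * θ)
      = 2 * Real.cos θ := by
    have hsum : (∑ m ∈ Finset.Icc (1 - (Λ:ℤ)) (Λ:ℤ),
        Real.cos ((2*(m:ℝ) - 1) * θ)) * (2 * Real.sin θ)
        = 2 * Real.sin (2*(Λ:ℝ) * θ) := by
      rw [Finset.sum_mul]
      calc ∑ m ∈ Finset.Icc (1 - (Λ:ℤ)) (Λ:ℤ),
            Real.cos ((2*(m:ℝ) - 1) * θ) * (2 * Real.sin θ)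
          = ∑ m ∈ Finset.Icc (1 - (Λ:ℤ)) (Λ:ℤ),
            (Real.sin (2*(m:ℝ) * θ) - Real.sin ((2*(m:ℝ) - 2) * θ)) :=
            Finset.sum_congr rfl fun m _ => htel m
        _ = ∑ i ∈ Finset.range (2*Λ), (f (i+1) - f i) := by
            rw [hmap, Finset.sum_map]
            apply Finset.sum_congr rfl
            intro i _
            simp only [Function.Embedding.coeFn_mk, hf]
            push_cast
            ring_nf
        _ = f (2*Λ) - f 0 := Finset.sum_range_sub f (2*Λ)
        _ = 2 * Real.sin (2*(Λ:ℝ) * θ) := by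
            simp only [hf]
            push_cast
            rw [show (2*(2*(Λ:ℝ)) - 2*(Λ:ℝ)) * θ = 2*(Λ:ℝ) * θ by ring,
              show (2*(0:ℝ) - 2*(Λ:ℝ)) * θ = -(2*(Λ:ℝ) * θ) by ring, Real.sin_neg]
            ring
    have hval : Real.sin (2*(Λ:ℝ) * θ) = 2 * Real.sin θ * Real.cos θ := by
      have h : 2*(Λ:ℝ) * θ = π - 2 * θ := by nlinarith [hπeq]
      rw [h, Real.sin_pi_sub, Real.sin_two_mul]
    rw [hval] at hsum
    have h2s : Real.sin θ ≠ 0 := ne_of_gt hsinθ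
    have h3 : (∑ m ∈ Finset.Icc (1 - (Λ:ℤ)) (Λ:ℤ), Real.cos ((2*(m:ℝ) - 1) * θ))
        * (2 * Real.sin θ) = (2 * Real.cos θ) * (2 * Real.sin θ) := by
      rw [hsum]; ring
    exact mul_right_cancel₀ (by positivity) h3
  have key : ∑ m ∈ Finset.Icc (1 - (Λ:ℤ)) (Λ:ℤ),
      Real.cos ((m:ℝ) * θ) * Real.cos (((m:ℝ) - 1) * θ)
      = ((Λ:ℝ) + 1) * Real.cos θ := by
    rw [Finset.sum_congr rfl fun m _ => hps m]
    rw [← Finset.sum_div, Finset.sum_add_distrib, Finset.sum_const, hS]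
    have hcard : (Finset.Icc (1 - (Λ:ℤ)) (Λ:ℤ)).card = 2*Λ := by
      rw [Int.card_Icc]; omega
    rw [hcard, nsmul_eq_mul]
    push_cast
    ring
  calc ((Λ:ℝ) + 1) * Real.cos (π / (2*(Λ:ℝ)+2))
      = ∑ m ∈ Finset.Icc (1 - (Λ:ℤ)) (Λ:ℤ),
          Real.cos ((m:ℝ) * θ) * Real.cos (((m:ℝ) - 1) * θ) := by
        rw [key]
    _ ≤ _ := step1
end

section
/- Let Λ ≥ 1 and k = k(Λ) ≥ Λ²(Λ+1)². On the fuzzy circle S¹_Λ, the state χ with components χ_m = cos(πm/(2Λ+2)) (m = −Λ,...,Λ) satisfies (Δx)²_χ := ⟨x²⟩_χ − ⟨x₁⟩_χ² ≤ (1 + π²/4)/(Λ+1)² < 3.5/(Λ+1)². -/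
open Real

lemma icc_ins (a b : ℤ) (h : a ≤ b + 1) :
    Finset.Icc a (b+1) = insert (b+1) (Finset.Icc a b) := by
  ext x; simp [Finset.mem_Icc]; omega

lemma tele (f : ℤ → ℝ) (a : ℤ) :
    ∀ b, a ≤ b → ∑ m ∈ Finset.Icc a b, (f m - f (m-1)) = f b - f (a-1) := by
  refine Int.le_induction ?_ ?_
  · simp
  · intro n hn ih
    rw [icc_ins a n (by omega), Finset.sum_insert (by simp [Finset.mem_Icc]), ih]
    ring

lemma sumsq (n : ℕ) : ∑ m ∈ Finset.Icc 1 n, (m:ℝ)^2 = n*(n+1)*(2*n+1)/6 := by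
  induction n with
  | zero => simp
  | succ n ih =>
      rw [Finset.sum_Icc_succ_top (by omega), ih]
      push_cast; ring

lemma key_sum (Λ : ℕ) (hΛ : 1 ≤ Λ) :
    ∑ m ∈ Finset.Icc (1 - (Λ:ℤ)) (Λ:ℤ),
      Real.cos ((m:ℝ) * (π / (2*(Λ:ℝ)+2))) * Real.cos (((m:ℝ)-1) * (π / (2*(Λ:ℝ)+2)))
      = ((Λ:ℝ)+1) * Real.cos (π / (2*(Λ:ℝ)+2)) := by
  have hΛ1 : (1:ℝ) ≤ (Λ:ℝ) := by exact_mod_cast hΛ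
  set θ := π / (2*(Λ:ℝ)+2) with hθdef
  have hden : (0:ℝ) < 2*(Λ:ℝ)+2 := by positivity
  have hθpos : 0 < θ := by positivity
  have hθpi : (2*(Λ:ℝ)+2) * θ = π := by rw [hθdef]; field_simp
  have hθlt : θ < π := by
    rw [hθdef, div_lt_iff₀ hden]; nlinarith [Real.pi_pos]
  have hsin : 0 < Real.sin θ := Real.sin_pos_of_pos_of_lt_pi hθpos hθlt
  have hab : (1 - (Λ:ℤ)) ≤ (Λ:ℤ) := by
    have : (1:ℤ) ≤ (Λ:ℤ) := by exact_mod_cast hΛ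
    omega
  -- telescoping sum
  have hterm : ∀ m : ℤ, 2 * Real.sin θ * Real.cos ((2*(m:ℝ)-1)*θ)
      = Real.sin (2*(m:ℝ)*θ) - Real.sin (2*(((m-1:ℤ)):ℝ)*θ) := by
    intro m
    push_cast
    have e1 : (2*(m:ℝ)*θ - 2*((m:ℝ)-1)*θ)/2 = θ := by ring
    have e2 : (2*(m:ℝ)*θ + 2*((m:ℝ)-1)*θ)/2 = (2*(m:ℝ)-1)*θ := by ring
    rw [Real.sin_sub_sin, e1, e2]
  have h2L : Real.sin (2*((Λ:ℤ):ℝ)*θ) = 2*Real.sin θ*Real.cos θ := by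
    have harg : 2*((Λ:ℤ):ℝ)*θ = π - 2*θ := by
      rw [← hθpi]; push_cast; ring
    rw [harg, Real.sin_pi_sub, Real.sin_two_mul]
  have hsum1 : ∑ m ∈ Finset.Icc (1 - (Λ:ℤ)) (Λ:ℤ), Real.cos ((2*(m:ℝ)-1)*θ)
      = 2 * Real.cos θ := by
    have htel := tele (fun m : ℤ => Real.sin (2*(m:ℝ)*θ)) (1-(Λ:ℤ)) (Λ:ℤ) hab
    have hh : (2*Real.sin θ) * ∑ m ∈ Finset.Icc (1 - (Λ:ℤ)) (Λ:ℤ),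
        Real.cos ((2*(m:ℝ)-1)*θ) = (2*Real.sin θ) * (2*Real.cos θ) := by
      rw [Finset.mul_sum]
      calc ∑ m ∈ Finset.Icc (1 - (Λ:ℤ)) (Λ:ℤ), 2*Real.sin θ * Real.cos ((2*(m:ℝ)-1)*θ)
          = ∑ m ∈ Finset.Icc (1 - (Λ:ℤ)) (Λ:ℤ),
              (Real.sin (2*(m:ℝ)*θ) - Real.sin (2*(((m-1:ℤ)):ℝ)*θ)) :=
            Finset.sum_congr rfl (fun m _ => hterm m)
        _ = Real.sin (2*((Λ:ℤ):ℝ)*θ) - Real.sin (2*(((1-(Λ:ℤ)-1:ℤ)):ℝ)*θ) := htel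
        _ = (2*Real.sin θ) * (2*Real.cos θ) := by
            have : (2*(((1-(Λ:ℤ)-1:ℤ)):ℝ)*θ) = -(2*((Λ:ℤ):ℝ)*θ) := by push_cast; ring
            rw [this, Real.sin_neg, h2L]; ring
    exact mul_left_cancel₀ (by positivity) hh
  have hpt : ∀ m : ℤ, Real.cos ((m:ℝ)*θ) * Real.cos (((m:ℝ)-1)*θ)
      = (Real.cos θ + Real.cos ((2*(m:ℝ)-1)*θ))/2 := by
    intro m
    have e1 : Real.cos θ = Real.cos ((m:ℝ)*θ - ((m:ℝ)-1)*θ) := by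
      rw [show (m:ℝ)*θ - ((m:ℝ)-1)*θ = θ by ring]
    have e2 : Real.cos ((2*(m:ℝ)-1)*θ) = Real.cos ((m:ℝ)*θ + ((m:ℝ)-1)*θ) := by
      rw [show (m:ℝ)*θ + ((m:ℝ)-1)*θ = (2*(m:ℝ)-1)*θ by ring]
    rw [e1, e2, Real.cos_sub, Real.cos_add]; ring
  have hcard : (Finset.Icc (1 - (Λ:ℤ)) (Λ:ℤ)).card = 2*Λ := by
    rw [Int.card_Icc]; omega
  calc ∑ m ∈ Finset.Icc (1 - (Λ:ℤ)) (Λ:ℤ),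
        Real.cos ((m:ℝ)*θ) * Real.cos (((m:ℝ)-1)*θ)
      = ∑ m ∈ Finset.Icc (1 - (Λ:ℤ)) (Λ:ℤ),
        (Real.cos θ + Real.cos ((2*(m:ℝ)-1)*θ))/2 :=
        Finset.sum_congr rfl (fun m _ => hpt m)
    _ = ((∑ _m ∈ Finset.Icc (1 - (Λ:ℤ)) (Λ:ℤ), Real.cos θ)
        + ∑ m ∈ Finset.Icc (1 - (Λ:ℤ)) (Λ:ℤ), Real.cos ((2*(m:ℝ)-1)*θ))/2 := by
        rw [← Finset.sum_add_distrib, Finset.sum_div]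
    _ = ((Λ:ℝ)+1) * Real.cos θ := by
        rw [Finset.sum_const, hsum1, hcard, nsmul_eq_mul]
        push_cast; ring


set_option maxHeartbeats 1000000 in
/-- On the fuzzy circle `S¹_Λ` with `Λ ≥ 1` and `k = k(Λ) ≥ Λ²(Λ+1)²`, the state `χ`
with components `χ_m = cos(πm/(2Λ+2))`, `m = −Λ,…,Λ`, satisfies
`(Δx)²_χ = ⟨x²⟩_χ − ⟨x₁⟩_χ² ≤ (1+π²/4)/(Λ+1)² < 3.5/(Λ+1)²`, where
`⟨x²⟩_χ = 1 + [2∑_{m=1}^{Λ−1}(m²/k)χ_m²]/(Λ+1) + [Λ(Λ−1)/k − 1]χ_Λ²/(Λ+1)` and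
`⟨x₁⟩_χ = [∑_{m=1−Λ}^{Λ} b_m χ_m χ_{m−1}]/(Λ+1)` with `b_m = √(1+m(m−1)/k)`. -/
theorem stmt_19 (Λ : ℕ) (hΛ : 1 ≤ Λ) (k : ℝ)
    (hk : (Λ : ℝ) ^ 2 * ((Λ : ℝ) + 1) ^ 2 ≤ k) :
    (1 + (2 * ∑ m ∈ Finset.Icc 1 (Λ - 1),
          ((m : ℝ) ^ 2 / k) * Real.cos (π * (m : ℝ) / (2 * (Λ : ℝ) + 2)) ^ 2)
            / ((Λ : ℝ) + 1)
      + ((Λ : ℝ) * ((Λ : ℝ) - 1) / k - 1)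
          * Real.cos (π * (Λ : ℝ) / (2 * (Λ : ℝ) + 2)) ^ 2 / ((Λ : ℝ) + 1))
      - ((∑ m ∈ Finset.Icc (1 - (Λ : ℤ)) (Λ : ℤ),
          Real.sqrt (1 + (m : ℝ) * ((m : ℝ) - 1) / k)
            * Real.cos (π * (m : ℝ) / (2 * (Λ : ℝ) + 2))
            * Real.cos (π * ((m : ℝ) - 1) / (2 * (Λ : ℝ) + 2))) / ((Λ : ℝ) + 1)) ^ 2
      ≤ (1 + π ^ 2 / 4) / ((Λ : ℝ) + 1) ^ 2 ∧
    (1 + π ^ 2 / 4) / ((Λ : ℝ) + 1) ^ 2 < 3.5 / ((Λ : ℝ) + 1) ^ 2 := by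
  have hΛ1 : (1:ℝ) ≤ (Λ:ℝ) := by exact_mod_cast hΛ
  have hNpos : (0:ℝ) < (Λ:ℝ) + 1 := by linarith
  have hden : (0:ℝ) < 2*(Λ:ℝ)+2 := by positivity
  have hkpos : (0:ℝ) < k := lt_of_lt_of_le (by positivity) hk
  have hpi := Real.pi_pos
  set θ : ℝ := π / (2*(Λ:ℝ)+2) with hθdef
  have hθpos : 0 < θ := by positivity
  have hθhalf : (Λ:ℝ) * θ ≤ π/2 := by
    rw [hθdef, mul_div_assoc']
    rw [div_le_div_iff₀ hden (by norm_num)]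
    nlinarith
  have hθle1 : θ ≤ 1 := by
    rw [hθdef, div_le_one hden]
    nlinarith [Real.pi_lt_d2]
  -- cos nonneg on the relevant range
  have hcos_nonneg : ∀ x : ℝ, -(Λ:ℝ) ≤ x → x ≤ (Λ:ℝ) → 0 ≤ Real.cos (x * θ) := by
    intro x h1 h2
    apply Real.cos_nonneg_of_mem_Icc
    constructor
    · have : -((Λ:ℝ) * θ) ≤ x * θ := by nlinarith
      linarith
    · have : x * θ ≤ (Λ:ℝ) * θ := by nlinarith
      linarith
  -- argument rewriting
  have harg : ∀ x : ℝ, π * x / (2*(Λ:ℝ)+2) = x * θ := by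
    intro x; rw [hθdef]; ring
  -- lower bound for the x₁ sum
  have hBsum : ((Λ:ℝ)+1) * Real.cos θ ≤
      ∑ m ∈ Finset.Icc (1 - (Λ:ℤ)) (Λ:ℤ),
        Real.sqrt (1 + (m:ℝ) * ((m:ℝ) - 1) / k)
          * Real.cos (π * (m:ℝ) / (2*(Λ:ℝ)+2))
          * Real.cos (π * ((m:ℝ)-1) / (2*(Λ:ℝ)+2)) := by
    rw [← key_sum Λ hΛ]
    apply Finset.sum_le_sum
    intro m hm
    rw [Finset.mem_Icc] at hm
    have hm1 : (1:ℝ) - (Λ:ℝ) ≤ (m:ℝ) := by exact_mod_cast hm.1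
    have hm2 : (m:ℝ) ≤ (Λ:ℝ) := by exact_mod_cast hm.2
    have hc1 : 0 ≤ Real.cos ((m:ℝ) * θ) := hcos_nonneg _ (by linarith) hm2
    have hc2 : 0 ≤ Real.cos (((m:ℝ)-1) * θ) := hcos_nonneg _ (by linarith) (by linarith)
    have hmm : (0:ℝ) ≤ (m:ℝ) * ((m:ℝ) - 1) := by
      have : (0:ℤ) ≤ m * (m - 1) := by
        rcases le_or_gt 1 m with h | h
        · nlinarith
        · nlinarith
      exact_mod_cast this
    have hb : (1:ℝ) ≤ Real.sqrt (1 + (m:ℝ) * ((m:ℝ) - 1) / k) := by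
      have h0 : 0 ≤ (m:ℝ) * ((m:ℝ) - 1) / k := by positivity
      calc (1:ℝ) = Real.sqrt 1 := Real.sqrt_one.symm
        _ ≤ Real.sqrt (1 + (m:ℝ) * ((m:ℝ) - 1) / k) := Real.sqrt_le_sqrt (by linarith)
    rw [harg (m:ℝ), harg ((m:ℝ)-1), mul_assoc]
    calc Real.cos ((m:ℝ) * θ) * Real.cos (((m:ℝ)-1) * θ)
        = 1 * (Real.cos ((m:ℝ) * θ) * Real.cos (((m:ℝ)-1) * θ)) := by ring
      _ ≤ Real.sqrt (1 + (m:ℝ) * ((m:ℝ) - 1) / k)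
          * (Real.cos ((m:ℝ) * θ) * Real.cos (((m:ℝ)-1) * θ)) := by
          apply mul_le_mul_of_nonneg_right hb (mul_nonneg hc1 hc2)
  have hcosθ_nonneg : 0 ≤ Real.cos θ := by
    apply Real.cos_nonneg_of_mem_Icc
    constructor
    · linarith
    · calc θ = 1 * θ := by ring
        _ ≤ (Λ:ℝ) * θ := by nlinarith
        _ ≤ π/2 := hθhalf
  have hB : Real.cos θ ≤
      (∑ m ∈ Finset.Icc (1 - (Λ:ℤ)) (Λ:ℤ),
        Real.sqrt (1 + (m:ℝ) * ((m:ℝ) - 1) / k)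
          * Real.cos (π * (m:ℝ) / (2*(Λ:ℝ)+2))
          * Real.cos (π * ((m:ℝ)-1) / (2*(Λ:ℝ)+2))) / ((Λ:ℝ)+1) := by
    rw [le_div_iff₀ hNpos]
    calc Real.cos θ * ((Λ:ℝ)+1) = ((Λ:ℝ)+1) * Real.cos θ := by ring
      _ ≤ _ := hBsum
  have hB2 : Real.cos θ ^ 2 ≤
      ((∑ m ∈ Finset.Icc (1 - (Λ:ℤ)) (Λ:ℤ),
        Real.sqrt (1 + (m:ℝ) * ((m:ℝ) - 1) / k)
          * Real.cos (π * (m:ℝ) / (2*(Λ:ℝ)+2))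
          * Real.cos (π * ((m:ℝ)-1) / (2*(Λ:ℝ)+2))) / ((Λ:ℝ)+1)) ^ 2 :=
    pow_le_pow_left₀ hcosθ_nonneg hB 2
  have hcossq : 1 - θ^2 ≤ Real.cos θ ^ 2 := by
    have h1 : 1 - θ^2/2 ≤ Real.cos θ := Real.one_sub_sq_div_two_le_cos
    nlinarith [sq_nonneg θ, sq_nonneg (θ^2)]
  have hθsq : θ^2 = π^2 / (4 * ((Λ:ℝ)+1)^2) := by
    rw [hθdef]
    rw [div_pow]
    congr 1
    ring
  -- upper bound for x² sum
  have hsum2 : ∑ m ∈ Finset.Icc 1 (Λ-1),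
      ((m:ℝ)^2 / k) * Real.cos (π * (m:ℝ) / (2*(Λ:ℝ)+2)) ^ 2
      ≤ ((Λ:ℝ)-1)*(Λ:ℝ)*(2*(Λ:ℝ)-1)/(6*k) := by
    calc ∑ m ∈ Finset.Icc 1 (Λ-1),
        ((m:ℝ)^2 / k) * Real.cos (π * (m:ℝ) / (2*(Λ:ℝ)+2)) ^ 2
        ≤ ∑ m ∈ Finset.Icc 1 (Λ-1), (m:ℝ)^2 / k := by
          apply Finset.sum_le_sum
          intro m _
          have : (0:ℝ) ≤ (m:ℝ)^2 / k := by positivity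
          nlinarith [Real.cos_sq_le_one (π * (m:ℝ) / (2*(Λ:ℝ)+2)),
            sq_nonneg (Real.cos (π * (m:ℝ) / (2*(Λ:ℝ)+2)))]
      _ = (∑ m ∈ Finset.Icc 1 (Λ-1), (m:ℝ)^2) / k := by rw [Finset.sum_div]
      _ = ((Λ:ℝ)-1)*(Λ:ℝ)*(2*(Λ:ℝ)-1)/(6*k) := by
          rw [sumsq (Λ-1), Nat.cast_sub hΛ, div_div]
          push_cast
          ring
  have hU : ((Λ:ℝ) * ((Λ:ℝ)-1) / k - 1) * Real.cos (π * (Λ:ℝ) / (2*(Λ:ℝ)+2)) ^ 2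
      ≤ (Λ:ℝ) * ((Λ:ℝ)-1) / k := by
    have ha : (0:ℝ) ≤ (Λ:ℝ) * ((Λ:ℝ)-1) / k := by
      apply div_nonneg _ (le_of_lt hkpos)
      nlinarith
    nlinarith [Real.cos_sq_le_one (π * (Λ:ℝ) / (2*(Λ:ℝ)+2)),
      sq_nonneg (Real.cos (π * (Λ:ℝ) / (2*(Λ:ℝ)+2)))]
  -- combine the x² bounds
  have hD : (2 * (((Λ:ℝ)-1)*(Λ:ℝ)*(2*(Λ:ℝ)-1)/(6*k)) + (Λ:ℝ) * ((Λ:ℝ)-1) / k)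
      / ((Λ:ℝ)+1) ≤ 1 / ((Λ:ℝ)+1)^2 := by
    rw [div_le_div_iff₀ hNpos (by positivity)]
    have key : (2 * (((Λ:ℝ)-1)*(Λ:ℝ)*(2*(Λ:ℝ)-1)/(6*k)) + (Λ:ℝ) * ((Λ:ℝ)-1) / k)
        = (((Λ:ℝ)-1)*(Λ:ℝ)*(2*(Λ:ℝ)-1)/3 + (Λ:ℝ) * ((Λ:ℝ)-1)) / k := by
      field_simp; ring
    rw [key, div_mul_eq_mul_div, div_le_iff₀ hkpos]
    nlinarith [hk, sq_nonneg ((Λ:ℝ)-1), sq_nonneg ((Λ:ℝ)+1), mul_pos hNpos hNpos]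
  constructor
  · have hfinal : (1 + π^2/4) / ((Λ:ℝ)+1)^2
        = 1/((Λ:ℝ)+1)^2 + π^2/(4*((Λ:ℝ)+1)^2) := by
      field_simp
    have hA : (2 * ∑ m ∈ Finset.Icc 1 (Λ-1),
          ((m:ℝ)^2 / k) * Real.cos (π * (m:ℝ) / (2*(Λ:ℝ)+2)) ^ 2) / ((Λ:ℝ)+1)
        + ((Λ:ℝ) * ((Λ:ℝ)-1) / k - 1)
            * Real.cos (π * (Λ:ℝ) / (2*(Λ:ℝ)+2)) ^ 2 / ((Λ:ℝ)+1)
        ≤ 1/((Λ:ℝ)+1)^2 := by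
      calc _ ≤ (2 * (((Λ:ℝ)-1)*(Λ:ℝ)*(2*(Λ:ℝ)-1)/(6*k)) + (Λ:ℝ) * ((Λ:ℝ)-1) / k)
          / ((Λ:ℝ)+1) := by
            rw [← add_div, div_le_div_iff₀ hNpos hNpos]
            have hTU : 2 * (∑ m ∈ Finset.Icc 1 (Λ-1),
                ((m:ℝ)^2 / k) * Real.cos (π * (m:ℝ) / (2*(Λ:ℝ)+2)) ^ 2)
                + ((Λ:ℝ) * ((Λ:ℝ)-1) / k - 1)
                    * Real.cos (π * (Λ:ℝ) / (2*(Λ:ℝ)+2)) ^ 2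
                ≤ 2 * (((Λ:ℝ)-1)*(Λ:ℝ)*(2*(Λ:ℝ)-1)/(6*k)) + (Λ:ℝ) * ((Λ:ℝ)-1) / k := by
              linarith
            nlinarith [hTU, hNpos]
        _ ≤ 1/((Λ:ℝ)+1)^2 := hD
    rw [hfinal]
    have hBB := hB2
    have := hcossq
    rw [hθsq] at this
    linarith
  · rw [div_lt_div_iff₀ (by positivity) (by positivity)]
    have hπ2 : π^2 < 9.9225 := by nlinarith [Real.pi_lt_d2, Real.pi_pos]
    nlinarith [hπ2, mul_pos hNpos hNpos]
end
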